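/- Weighted Hardy inequality at infinity: let a > 1/2 and let f be locally absolutely continuous on (0,∞) with ∫₀^∞ |f'(r)|² r^{2a} dr < ∞. Then the limit f(∞) = lim_{r→∞} f(r) exists and (a - 1/2)² ∫₀^∞ |f(r) - f(∞)|² r^{2a-2} dr ≤ ∫₀^∞ |f'(r)|² r^{2a} dr. -/

import Mathlib

open MeasureTheory Set Filter Topology ENNReal

lemma lint_Ioi {c : ℝ} (hc : c < -1) {r : ℝ} (hr : 0 < r) :
    ∫⁻ t in Ioi r, ENNReal.ofReal (t ^ c) = ENNReal.ofReal (r ^ (c+1) / (-(c+1))) := by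
  rw [← ofReal_integral_eq_lintegral_ofReal (integrableOn_Ioi_rpow_of_lt hc hr)
      ((ae_restrict_iff' measurableSet_Ioi).2 (Eventually.of_forall fun t ht =>
        Real.rpow_nonneg (hr.trans ht).le c)),
    integral_Ioi_rpow_of_lt hc hr, neg_div, div_neg]

lemma lint_Ioo {c : ℝ} (hc : -1 < c) {t : ℝ} (ht : 0 < t) :
    ∫⁻ r in Ioo 0 t, ENNReal.ofReal (r ^ c) = ENNReal.ofReal (t ^ (c+1) / (c+1)) := by
  rw [Measure.restrict_congr_set Ioo_ae_eq_Ioc]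
  have hi : IntegrableOn (fun r : ℝ => r ^ c) (Ioc 0 t) := by
    have h := intervalIntegral.intervalIntegrable_rpow' (a := 0) (b := t) hc
    rwa [intervalIntegrable_iff_integrableOn_Ioc_of_le ht.le] at h
  rw [← ofReal_integral_eq_lintegral_ofReal hi
      ((ae_restrict_iff' measurableSet_Ioc).2 (Eventually.of_forall fun r hr =>
        Real.rpow_nonneg hr.1.le c))]
  rw [← intervalIntegral.integral_of_le ht.le, integral_rpow (Or.inl hc),
    Real.zero_rpow (by linarith), sub_zero]

lemma holder_sq {μ : Measure ℝ} {u v : ℝ → ℝ≥0∞} (hu : AEMeasurable u μ) (hv : AEMeasurable v μ) :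
    (∫⁻ x, u x * v x ∂μ) ^ 2 ≤ (∫⁻ x, u x ^ 2 ∂μ) * (∫⁻ x, v x ^ 2 ∂μ) := by
  have h := ENNReal.lintegral_mul_le_Lp_mul_Lq μ (p := 2) (q := 2)
    ⟨by norm_num, by norm_num, by norm_num⟩ hu hv
  have h2 : ∀ x : ℝ≥0∞, x ^ (2:ℝ) = x ^ 2 := fun x => by
    rw [← ENNReal.rpow_natCast x 2]; norm_num
  calc (∫⁻ x, u x * v x ∂μ) ^ 2
      ≤ ((∫⁻ x, u x ^ (2:ℝ) ∂μ) ^ (1/2:ℝ) * (∫⁻ x, v x ^ (2:ℝ) ∂μ) ^ (1/2:ℝ)) ^ 2 :=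
        pow_le_pow_left₀ zero_le h 2
    _ = (∫⁻ x, u x ^ 2 ∂μ) * (∫⁻ x, v x ^ 2 ∂μ) := by
        rw [mul_pow, ← ENNReal.rpow_natCast (_ ^ (1/2:ℝ)) 2, ← ENNReal.rpow_natCast (_ ^ (1/2:ℝ)) 2,
          ← ENNReal.rpow_mul, ← ENNReal.rpow_mul]
        norm_num [h2]

theorem stmt_4 (f f' : ℝ → ℂ) (a : ℝ) (ha : 1/2 < a)
    (hloc : ∀ s ∈ Ioi (0:ℝ), ∀ t ∈ Ioi (0:ℝ), IntervalIntegrable f' volume s t)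
    (hFTC : ∀ s ∈ Ioi (0:ℝ), ∀ t ∈ Ioi (0:ℝ), f t - f s = ∫ r in s..t, f' r)
    (hint : ∫⁻ r in Ioi (0:ℝ), ENNReal.ofReal (‖f' r‖^2 * r ^ (2*a)) < ⊤) :
    ∃ L : ℂ, Tendsto f atTop (𝓝 L) ∧
      ENNReal.ofReal ((a - 1/2)^2) *
          ∫⁻ r in Ioi (0:ℝ), ENNReal.ofReal (‖f r - L‖^2 * r ^ (2*a - 2))
        ≤ ∫⁻ r in Ioi (0:ℝ), ENNReal.ofReal (‖f' r‖^2 * r ^ (2*a)) := by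
  have hγ : (0:ℝ) < a - 1/2 := by linarith
  -- measurability of f' on (0,∞)
  have hcover : (Ioi (0:ℝ)) = ⋃ n : ℕ, Ioc ((n:ℝ)+1)⁻¹ ((n:ℝ)+1) := by
    ext x
    simp only [mem_Ioi, mem_iUnion, mem_Ioc]
    constructor
    · intro hx
      obtain ⟨n, hn⟩ := exists_nat_gt (max x⁻¹ x)
      refine ⟨n, ?_, ?_⟩
      · rw [inv_lt_comm₀ (by positivity) hx]
        exact lt_of_le_of_lt (le_max_left _ _) (hn.trans (by linarith))
      · exact le_of_lt (lt_of_le_of_lt (le_max_right _ _) (hn.trans (by linarith)))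
    · rintro ⟨n, h1, _⟩
      exact lt_trans (by positivity) h1
  have hmeas : AEStronglyMeasurable f' (volume.restrict (Ioi (0:ℝ))) := by
    rw [hcover, aestronglyMeasurable_iUnion_iff]
    intro n
    have h1 : (0:ℝ) < ((n:ℝ)+1)⁻¹ := by positivity
    have h2 : (0:ℝ) < (n:ℝ)+1 := by positivity
    have h3 : ((n:ℝ)+1)⁻¹ ≤ (n:ℝ)+1 := by
      have h4 : ((n:ℝ)+1)⁻¹ ≤ 1 := by
        rw [inv_le_one_iff₀]
        right; nlinarith [Nat.cast_nonneg (α := ℝ) n]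
      nlinarith [Nat.cast_nonneg (α := ℝ) n]
    have := hloc _ (mem_Ioi.2 h1) _ (mem_Ioi.2 h2)
    rw [intervalIntegrable_iff_integrableOn_Ioc_of_le h3] at this
    exact this.aestronglyMeasurable
  have he : AEMeasurable (fun t => ENNReal.ofReal ‖f' t‖) (volume.restrict (Ioi (0:ℝ))) :=
    ENNReal.measurable_ofReal.comp_aemeasurable hmeas.norm.aemeasurable
  set φ : ℝ → ℝ≥0∞ := he.mk _ with hφdef
  have hφm : Measurable φ := he.measurable_mk
  have hφ : (fun t => ENNReal.ofReal ‖f' t‖) =ᵐ[volume.restrict (Ioi (0:ℝ))] φ := he.ae_eq_mk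
  -- rewrite RHS integrand
  have hEq : (fun r => ENNReal.ofReal (‖f' r‖^2 * r ^ (2*a)))
      =ᵐ[volume.restrict (Ioi (0:ℝ))] fun r => φ r ^ 2 * ENNReal.ofReal (r ^ (2*a)) := by
    filter_upwards [hφ] with r hφr
    rw [ENNReal.ofReal_mul (sq_nonneg _), ENNReal.ofReal_pow (norm_nonneg _), hφr]
  have hRHS : (∫⁻ r in Ioi (0:ℝ), ENNReal.ofReal (‖f' r‖^2 * r ^ (2*a)))
      = ∫⁻ r in Ioi (0:ℝ), φ r ^ 2 * ENNReal.ofReal (r ^ (2*a)) := lintegral_congr_ae hEq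
  -- Hölder bound for tails, with weight exponent q = (2a+1)/4
  have key : ∀ r : ℝ, 0 < r →
      (∫⁻ t in Ioi r, ENNReal.ofReal ‖f' t‖) ^ 2 ≤
        (∫⁻ t in Ioi r, φ t ^ 2 * ENNReal.ofReal (t ^ (a + 1/2))) *
          ENNReal.ofReal (r ^ (1/2 - a) / (a - 1/2)) := by
    intro r hr
    have hsub : Ioi r ⊆ Ioi (0:ℝ) := Ioi_subset_Ioi hr.le
    have hres : volume.restrict (Ioi r) ≤ volume.restrict (Ioi (0:ℝ)) :=
      Measure.restrict_mono hsub le_rfl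
    have heM : AEMeasurable (fun t => ENNReal.ofReal ‖f' t‖) (volume.restrict (Ioi r)) :=
      he.mono_measure hres
    have hφ' : (fun t => ENNReal.ofReal ‖f' t‖) =ᵐ[volume.restrict (Ioi r)] φ :=
      ae_restrict_of_ae_restrict_of_subset hsub hφ
    have hwm : Measurable fun t : ℝ => ENNReal.ofReal (t ^ ((2*a+1)/4)) := by fun_prop
    have hvm : Measurable fun t : ℝ => ENNReal.ofReal (t ^ (-((2*a+1)/4))) := by fun_prop
    have h1 : ∫⁻ t in Ioi r, ENNReal.ofReal ‖f' t‖
        = ∫⁻ t in Ioi r, (ENNReal.ofReal ‖f' t‖ * ENNReal.ofReal (t ^ ((2*a+1)/4))) *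
            ENNReal.ofReal (t ^ (-((2*a+1)/4))) := by
      refine lintegral_congr_ae ((ae_restrict_iff' measurableSet_Ioi).2
        (Eventually.of_forall fun t ht => ?_))
      have htp : (0:ℝ) < t := hr.trans ht
      dsimp only
      rw [mul_assoc, ← ENNReal.ofReal_mul (Real.rpow_nonneg htp.le _),
        ← Real.rpow_add htp]
      norm_num
    have hu2 : ∫⁻ t in Ioi r, (ENNReal.ofReal ‖f' t‖ * ENNReal.ofReal (t ^ ((2*a+1)/4))) ^ 2
        = ∫⁻ t in Ioi r, φ t ^ 2 * ENNReal.ofReal (t ^ (a + 1/2)) := by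
      refine lintegral_congr_ae ?_
      filter_upwards [hφ', (ae_restrict_iff' measurableSet_Ioi).2
        (Eventually.of_forall fun t (ht : t ∈ Ioi r) => ht)] with t hφt ht
      have htp : (0:ℝ) < t := hr.trans ht
      rw [mul_pow, hφt, pow_two (ENNReal.ofReal _), ← ENNReal.ofReal_mul (Real.rpow_nonneg htp.le _),
        ← Real.rpow_add htp, show (2*a+1)/4 + (2*a+1)/4 = a + 1/2 by ring]
    have hv2 : ∫⁻ t in Ioi r, (ENNReal.ofReal (t ^ (-((2*a+1)/4)))) ^ 2
        = ENNReal.ofReal (r ^ (1/2 - a) / (a - 1/2)) := by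
      have hpt : ∫⁻ t in Ioi r, (ENNReal.ofReal (t ^ (-((2*a+1)/4)))) ^ 2
          = ∫⁻ t in Ioi r, ENNReal.ofReal (t ^ (-a - 1/2)) := by
        refine lintegral_congr_ae ((ae_restrict_iff' measurableSet_Ioi).2
          (Eventually.of_forall fun t ht => ?_))
        have htp : (0:ℝ) < t := hr.trans ht
        dsimp only
        rw [pow_two, ← ENNReal.ofReal_mul (Real.rpow_nonneg htp.le _), ← Real.rpow_add htp,
          show -((2*a+1)/4) + -((2*a+1)/4) = -a - 1/2 by ring]
      rw [hpt, lint_Ioi (by linarith) hr, show -a - 1/2 + 1 = 1/2 - a by ring,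
        show -(1/2 - a) = a - 1/2 by ring]
    calc (∫⁻ t in Ioi r, ENNReal.ofReal ‖f' t‖) ^ 2
        = (∫⁻ t in Ioi r, (ENNReal.ofReal ‖f' t‖ * ENNReal.ofReal (t ^ ((2*a+1)/4))) *
            ENNReal.ofReal (t ^ (-((2*a+1)/4)))) ^ 2 := by rw [← h1]
      _ ≤ (∫⁻ t in Ioi r, (ENNReal.ofReal ‖f' t‖ * ENNReal.ofReal (t ^ ((2*a+1)/4))) ^ 2) *
            (∫⁻ t in Ioi r, (ENNReal.ofReal (t ^ (-((2*a+1)/4)))) ^ 2) :=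
          holder_sq (heM.mul hwm.aemeasurable) hvm.aemeasurable
      _ = _ := by rw [hu2, hv2]
  -- integrability of f' on (1, ∞)
  have hIfin : ∫⁻ r in Ioi (0:ℝ), φ r ^ 2 * ENNReal.ofReal (r ^ (2*a)) < ⊤ := by
    rwa [hRHS] at hint
  have hfin1 : ∫⁻ t in Ioi (1:ℝ), ENNReal.ofReal ‖f' t‖ < ⊤ := by
    have h1 := key 1 one_pos
    have h2 : (∫⁻ t in Ioi (1:ℝ), φ t ^ 2 * ENNReal.ofReal (t ^ (a + 1/2)))
        ≤ ∫⁻ t in Ioi (0:ℝ), φ t ^ 2 * ENNReal.ofReal (t ^ (2*a)) := by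
      refine le_trans (lintegral_mono_ae ((ae_restrict_iff' measurableSet_Ioi).2
        (Eventually.of_forall fun t ht => ?_))) (lintegral_mono' (Measure.restrict_mono
          (Ioi_subset_Ioi zero_le_one) le_rfl) le_rfl)
      have ht1 : (1:ℝ) ≤ t := le_of_lt ht
      exact mul_le_mul_right (ENNReal.ofReal_le_ofReal
        (Real.rpow_le_rpow_of_exponent_le ht1 (by linarith))) _
    have h3 : (∫⁻ t in Ioi (1:ℝ), ENNReal.ofReal ‖f' t‖) ^ 2 < ⊤ :=
      lt_of_le_of_lt h1 (ENNReal.mul_lt_top (lt_of_le_of_lt h2 hIfin) ENNReal.ofReal_lt_top)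
    by_contra hcon
    rw [not_lt, top_le_iff] at hcon
    rw [hcon, ENNReal.top_pow (by norm_num)] at h3
    exact lt_irrefl _ h3
  have hInt1 : IntegrableOn f' (Ioi (1:ℝ)) := by
    refine ⟨hmeas.mono_measure (Measure.restrict_mono (Ioi_subset_Ioi zero_le_one) le_rfl), ?_⟩
    rw [hasFiniteIntegral_iff_norm]
    exact hfin1
  -- integrability on all tails
  have hIoi : ∀ r : ℝ, 0 < r → IntegrableOn f' (Ioi r) := by
    intro r hr
    have hm1 : r ≤ max r 1 := le_max_left r 1
    have hm0 : (0:ℝ) < max r 1 := lt_of_lt_of_le one_pos (le_max_right r 1)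
    have h1 : IntegrableOn f' (Ioc r (max r 1)) := by
      have := hloc r (mem_Ioi.2 hr) (max r 1) (mem_Ioi.2 hm0)
      rwa [intervalIntegrable_iff_integrableOn_Ioc_of_le hm1] at this
    have h2 : IntegrableOn f' (Ioi (max r 1)) :=
      hInt1.mono_set (Ioi_subset_Ioi (le_max_right r 1))
    have := h1.union h2
    rwa [Ioc_union_Ioi_eq_Ioi hm1] at this
  -- the limit L
  set L : ℂ := f 1 + ∫ t in Ioi (1:ℝ), f' t with hLdef
  have hLt : Tendsto f atTop (𝓝 L) := by
    have h1 := intervalIntegral_tendsto_integral_Ioi 1 hInt1 tendsto_id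
    have h2 : Tendsto (fun t => f 1 + ∫ x in (1:ℝ)..t, f' x) atTop (𝓝 L) :=
      tendsto_const_nhds.add h1
    refine h2.congr' ?_
    filter_upwards [eventually_ge_atTop (1:ℝ)] with t ht
    rw [← hFTC 1 (mem_Ioi.2 one_pos) t (mem_Ioi.2 (lt_of_lt_of_le one_pos ht))]
    ring
  refine ⟨L, hLt, ?_⟩
  -- tail representation
  have hfrL : ∀ r : ℝ, 0 < r → f r - L = -∫ t in Ioi r, f' t := by
    intro r hr
    have h1 := intervalIntegral_tendsto_integral_Ioi r (hIoi r hr) tendsto_id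
    have h2 : Tendsto (fun t => f r + ∫ x in r..t, f' x) atTop (𝓝 (f r + ∫ t in Ioi r, f' t)) :=
      tendsto_const_nhds.add h1
    have h3 : Tendsto f atTop (𝓝 (f r + ∫ t in Ioi r, f' t)) := by
      refine h2.congr' ?_
      filter_upwards [eventually_gt_atTop (0:ℝ)] with t ht
      rw [← hFTC r (mem_Ioi.2 hr) t (mem_Ioi.2 ht)]
      ring
    have h4 := tendsto_nhds_unique h3 hLt
    rw [← h4]
    ring
  -- the kernel
  set W : ℝ → ℝ → ℝ≥0∞ := fun r t =>
    if r < t then ENNReal.ofReal (r ^ (a - 3/2)) * (φ t ^ 2 * ENNReal.ofReal (t ^ (a + 1/2)))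
    else 0 with hWdef
  have hWm : Measurable (Function.uncurry W) := by
    refine Measurable.ite (measurableSet_lt measurable_fst measurable_snd) ?_ measurable_const
    fun_prop
  -- pointwise bound
  have hpt : ∀ r : ℝ, 0 < r →
      ENNReal.ofReal (‖f r - L‖^2 * r ^ (2*a - 2)) ≤
        ENNReal.ofReal (a - 1/2)⁻¹ * ∫⁻ t in Ioi (0:ℝ), W r t := by
    intro r hr
    have hnorm : ENNReal.ofReal ‖f r - L‖ ≤ ∫⁻ t in Ioi r, ENNReal.ofReal ‖f' t‖ := by
      rw [hfrL r hr, norm_neg, ofReal_norm_eq_enorm]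
      refine le_trans (enorm_integral_le_lintegral_enorm _) (le_of_eq ?_)
      simp_rw [← ofReal_norm_eq_enorm]
    have hWint : ∫⁻ t in Ioi (0:ℝ), W r t
        = ∫⁻ t in Ioi r, ENNReal.ofReal (r ^ (a - 3/2)) *
            (φ t ^ 2 * ENNReal.ofReal (t ^ (a + 1/2))) := by
      have hind : ∀ t : ℝ, W r t = (Ioi r).indicator
          (fun t => ENNReal.ofReal (r ^ (a - 3/2)) * (φ t ^ 2 * ENNReal.ofReal (t ^ (a + 1/2)))) t := by
        intro t
        simp [hWdef, Set.indicator_apply, mem_Ioi]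
      simp_rw [hind]
      rw [lintegral_indicator measurableSet_Ioi, Measure.restrict_restrict measurableSet_Ioi,
        inter_eq_left.2 (Ioi_subset_Ioi hr.le)]
    calc ENNReal.ofReal (‖f r - L‖^2 * r ^ (2*a - 2))
        = (ENNReal.ofReal ‖f r - L‖) ^ 2 * ENNReal.ofReal (r ^ (2*a - 2)) := by
          rw [ENNReal.ofReal_mul (sq_nonneg _), ENNReal.ofReal_pow (norm_nonneg _)]
      _ ≤ (∫⁻ t in Ioi r, ENNReal.ofReal ‖f' t‖) ^ 2 * ENNReal.ofReal (r ^ (2*a - 2)) :=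
          mul_le_mul_left (pow_le_pow_left₀ zero_le hnorm 2) _
      _ ≤ ((∫⁻ t in Ioi r, φ t ^ 2 * ENNReal.ofReal (t ^ (a + 1/2))) *
            ENNReal.ofReal (r ^ (1/2 - a) / (a - 1/2))) * ENNReal.ofReal (r ^ (2*a - 2)) :=
          mul_le_mul_left (key r hr) _
      _ = (ENNReal.ofReal (a - 1/2)⁻¹ * ENNReal.ofReal (r ^ (a - 3/2))) *
            (∫⁻ t in Ioi r, φ t ^ 2 * ENNReal.ofReal (t ^ (a + 1/2))) := by
          have hrp : r ^ (2*a-2) * r ^ (1/2-a) = r ^ (a - 3/2) := by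
            rw [← Real.rpow_add hr]
            congr 1
            ring
          have hsc : ENNReal.ofReal (r ^ (1/2 - a) / (a - 1/2)) * ENNReal.ofReal (r ^ (2*a - 2))
              = ENNReal.ofReal (a - 1/2)⁻¹ * ENNReal.ofReal (r ^ (a - 3/2)) := by
            rw [← ENNReal.ofReal_mul (by positivity), ← ENNReal.ofReal_mul (by positivity)]
            congr 1
            calc r ^ (1/2 - a) / (a - 1/2) * r ^ (2*a - 2)
                = (r ^ (2*a-2) * r ^ (1/2-a)) * (a - 1/2)⁻¹ := by ring
              _ = (a - 1/2)⁻¹ * r ^ (a - 3/2) := by rw [hrp]; ring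
          rw [mul_assoc, mul_comm (ENNReal.ofReal (r ^ (1/2 - a) / (a - 1/2))) (ENNReal.ofReal (r ^ (2*a-2)))]
          rw [mul_comm] at hsc
          rw [hsc]
          ring
      _ = ENNReal.ofReal (a - 1/2)⁻¹ * ∫⁻ t in Ioi (0:ℝ), W r t := by
          rw [hWint, lintegral_const_mul' _ _ ENNReal.ofReal_ne_top, ← mul_assoc]
  -- Tonelli
  have hswap : ∫⁻ r in Ioi (0:ℝ), ∫⁻ t in Ioi (0:ℝ), W r t
      = ∫⁻ t in Ioi (0:ℝ), ∫⁻ r in Ioi (0:ℝ), W r t :=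
    lintegral_lintegral_swap hWm.aemeasurable
  have hinner : ∀ t : ℝ, 0 < t → ∫⁻ r in Ioi (0:ℝ), W r t
      = (φ t ^ 2 * ENNReal.ofReal (t ^ (a + 1/2))) * ENNReal.ofReal (t ^ (a - 1/2) / (a - 1/2)) := by
    intro t ht
    have hind : ∀ r : ℝ, W r t = (Iio t).indicator
        (fun r => ENNReal.ofReal (r ^ (a - 3/2)) * (φ t ^ 2 * ENNReal.ofReal (t ^ (a + 1/2)))) r := by
      intro r
      simp [hWdef, Set.indicator_apply, mem_Iio]
    simp_rw [hind]
    rw [lintegral_indicator measurableSet_Iio, Measure.restrict_restrict measurableSet_Iio,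
      inter_comm, Ioi_inter_Iio, lintegral_mul_const _ (by fun_prop),
      lint_Ioo (by linarith) ht, show a - 3/2 + 1 = a - 1/2 by ring]
    ring
  have hfinal : ∫⁻ r in Ioi (0:ℝ), ENNReal.ofReal (‖f r - L‖^2 * r ^ (2*a - 2))
      ≤ ENNReal.ofReal (a - 1/2)⁻¹ * (ENNReal.ofReal (a - 1/2)⁻¹ *
          ∫⁻ r in Ioi (0:ℝ), φ r ^ 2 * ENNReal.ofReal (r ^ (2*a))) := by
    calc ∫⁻ r in Ioi (0:ℝ), ENNReal.ofReal (‖f r - L‖^2 * r ^ (2*a - 2))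
        ≤ ∫⁻ r in Ioi (0:ℝ), ENNReal.ofReal (a - 1/2)⁻¹ * ∫⁻ t in Ioi (0:ℝ), W r t :=
          lintegral_mono_ae ((ae_restrict_iff' measurableSet_Ioi).2
            (Eventually.of_forall fun r hr => hpt r hr))
      _ = ENNReal.ofReal (a - 1/2)⁻¹ * ∫⁻ r in Ioi (0:ℝ), ∫⁻ t in Ioi (0:ℝ), W r t :=
          lintegral_const_mul' _ _ ENNReal.ofReal_ne_top
      _ = ENNReal.ofReal (a - 1/2)⁻¹ * ∫⁻ t in Ioi (0:ℝ), ∫⁻ r in Ioi (0:ℝ), W r t := by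
          rw [hswap]
      _ = ENNReal.ofReal (a - 1/2)⁻¹ * ∫⁻ t in Ioi (0:ℝ),
            ENNReal.ofReal (a - 1/2)⁻¹ * (φ t ^ 2 * ENNReal.ofReal (t ^ (2*a))) := by
          congr 1
          refine lintegral_congr_ae ((ae_restrict_iff' measurableSet_Ioi).2
            (Eventually.of_forall fun t ht => ?_))
          have ht' : (0:ℝ) < t := ht
          dsimp only
          rw [hinner t ht']
          have hcomb : ENNReal.ofReal (t ^ (a + 1/2)) * ENNReal.ofReal (t ^ (a - 1/2) / (a - 1/2))
              = ENNReal.ofReal (a - 1/2)⁻¹ * ENNReal.ofReal (t ^ (2*a)) := by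
            rw [← ENNReal.ofReal_mul (by positivity), ← ENNReal.ofReal_mul (by positivity)]
            congr 1
            have h5 : t ^ (a+1/2) * t ^ (a-1/2) = t ^ (2*a) := by
              rw [← Real.rpow_add ht']
              congr 1
              ring
            calc t ^ (a+1/2) * (t ^ (a-1/2)/(a-1/2))
                = (t ^ (a+1/2) * t ^ (a-1/2)) * (a-1/2)⁻¹ := by ring
              _ = (a-1/2)⁻¹ * t ^ (2*a) := by rw [h5]; ring
          calc (φ t ^ 2 * ENNReal.ofReal (t ^ (a + 1/2))) * ENNReal.ofReal (t ^ (a - 1/2) / (a - 1/2))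
              = φ t ^ 2 * (ENNReal.ofReal (t ^ (a + 1/2)) * ENNReal.ofReal (t ^ (a - 1/2) / (a - 1/2))) := by
                ring
            _ = φ t ^ 2 * (ENNReal.ofReal (a - 1/2)⁻¹ * ENNReal.ofReal (t ^ (2*a))) := by rw [hcomb]
            _ = ENNReal.ofReal (a - 1/2)⁻¹ * (φ t ^ 2 * ENNReal.ofReal (t ^ (2*a))) := by ring
      _ = ENNReal.ofReal (a - 1/2)⁻¹ * (ENNReal.ofReal (a - 1/2)⁻¹ *
            ∫⁻ r in Ioi (0:ℝ), φ r ^ 2 * ENNReal.ofReal (r ^ (2*a))) := by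
          rw [lintegral_const_mul' _ _ ENNReal.ofReal_ne_top]
  rw [hRHS]
  calc ENNReal.ofReal ((a - 1/2)^2) *
        ∫⁻ r in Ioi (0:ℝ), ENNReal.ofReal (‖f r - L‖^2 * r ^ (2*a - 2))
      ≤ ENNReal.ofReal ((a - 1/2)^2) * (ENNReal.ofReal (a - 1/2)⁻¹ * (ENNReal.ofReal (a - 1/2)⁻¹ *
          ∫⁻ r in Ioi (0:ℝ), φ r ^ 2 * ENNReal.ofReal (r ^ (2*a)))) := mul_le_mul_right hfinal _
    _ = (ENNReal.ofReal ((a - 1/2)^2) * ENNReal.ofReal (a - 1/2)⁻¹ * ENNReal.ofReal (a - 1/2)⁻¹) *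
          ∫⁻ r in Ioi (0:ℝ), φ r ^ 2 * ENNReal.ofReal (r ^ (2*a)) := by ring
    _ = ∫⁻ r in Ioi (0:ℝ), φ r ^ 2 * ENNReal.ofReal (r ^ (2*a)) := by
        rw [← ENNReal.ofReal_mul (by positivity), ← ENNReal.ofReal_mul (by positivity),
          show (a - 1/2)^2 * (a-1/2)⁻¹ * (a-1/2)⁻¹ = 1 by
            have h0 : (a - 1/2) ≠ 0 := ne_of_gt hγ
            rw [pow_two, show (a-1/2) * (a-1/2) * (a-1/2)⁻¹ * (a-1/2)⁻¹
              = ((a-1/2) * (a-1/2)⁻¹) * ((a-1/2) * (a-1/2)⁻¹) by ring,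
              mul_inv_cancel₀ h0, mul_one]]
        simp
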